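/- If f_1,...,f_r : X → Y are fibrewise pointed maps over B, then D_B(f_1,...,f_r) ≤ ∏_{i=1}^r (cat_B^*(f_i) + 1) − 1. -/

import Mathlib

open Set

/-- Two continuous maps are fibrewise homotopic over `B`: there is a homotopy
whose every time-slice commutes with the projections to `B`. -/
def FibHomotopic {B X Y : Type*} [TopologicalSpace B] [TopologicalSpace X] [TopologicalSpace Y]
    (pX : X → B) (pY : Y → B) (f g : C(X, Y)) : Prop :=
  ∃ H : f.Homotopy g, ∀ (x : X) (t : unitInterval), pY (H (t, x)) = pX x

/-- Sequential parametrized homotopic distance of a family of fibrewise maps: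
the least `n` such that `X` admits an open cover by `n + 1` open sets on each of
which all the maps are pairwise fibrewise homotopic (`∞` if none exists). -/
noncomputable def fibDist {B X Y ι : Type*} [TopologicalSpace B] [TopologicalSpace X]
    [TopologicalSpace Y] (pX : X → B) (pY : Y → B) (f : ι → C(X, Y)) : ℕ∞ :=
  sInf {n : ℕ∞ | ∃ k : ℕ, (k : ℕ∞) = n ∧ ∃ U : Fin (k + 1) → Set X,
    (∀ i, IsOpen (U i)) ∧ (⋃ i, U i) = Set.univ ∧
    ∀ i s t, FibHomotopic (fun x : U i => pX (x : X)) pY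
      ((f s).restrict (U i)) ((f t).restrict (U i))}

section Aux

variable {B X Y : Type*} [TopologicalSpace B] [TopologicalSpace X] [TopologicalSpace Y]
  {pX : X → B} {pY : Y → B}

theorem FibHomotopic.symm' {f g : C(X, Y)} (h : FibHomotopic pX pY f g) :
    FibHomotopic pX pY g f := by
  obtain ⟨H, hH⟩ := h
  exact ⟨H.symm, fun x t => hH x _⟩

theorem FibHomotopic.trans' {f g h : C(X, Y)} (h1 : FibHomotopic pX pY f g)
    (h2 : FibHomotopic pX pY g h) : FibHomotopic pX pY f h := by
  obtain ⟨H, hH⟩ := h1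
  obtain ⟨G, hG⟩ := h2
  refine ⟨H.trans G, fun x t => ?_⟩
  rw [ContinuousMap.Homotopy.trans_apply]
  split_ifs
  · exact hH x _
  · exact hG x _

/-- Restricting a fibrewise homotopy on `U` to a smaller set `V`. -/
theorem FibHomotopic.mono {U V : Set X} (hsub : V ⊆ U) (f g : C(X, Y))
    (h : FibHomotopic (fun x : U => pX (x : X)) pY (f.restrict U) (g.restrict U)) :
    FibHomotopic (fun x : V => pX (x : X)) pY (f.restrict V) (g.restrict V) := by
  obtain ⟨H, hH⟩ := h
  refine ⟨⟨⟨fun p => H (p.1, Set.inclusion hsub p.2), ?_⟩, ?_, ?_⟩, fun x t => ?_⟩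
  · exact H.continuous.comp (continuous_fst.prodMk
      ((continuous_inclusion hsub).comp continuous_snd))
  · intro x
    simp [ContinuousMap.Homotopy.apply_zero]
  · intro x
    simp [ContinuousMap.Homotopy.apply_one]
  · exact hH (Set.inclusion hsub x) t

theorem fibDist_mem_of_ne_top {ι : Type*} (pX : X → B) (pY : Y → B) (f : ι → C(X, Y))
    (h : fibDist pX pY f ≠ ⊤) :
    ∃ k : ℕ, (k : ℕ∞) = fibDist pX pY f ∧ ∃ U : Fin (k + 1) → Set X,
      (∀ i, IsOpen (U i)) ∧ (⋃ i, U i) = Set.univ ∧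
      ∀ i s t, FibHomotopic (fun x : U i => pX (x : X)) pY
        ((f s).restrict (U i)) ((f t).restrict (U i)) := by
  set S := {n : ℕ∞ | ∃ k : ℕ, (k : ℕ∞) = n ∧ ∃ U : Fin (k + 1) → Set X,
    (∀ i, IsOpen (U i)) ∧ (⋃ i, U i) = Set.univ ∧
    ∀ i s t, FibHomotopic (fun x : U i => pX (x : X)) pY
      ((f s).restrict (U i)) ((f t).restrict (U i))} with hS
  have hne : S.Nonempty := by
    by_contra hemp
    rw [Set.not_nonempty_iff_eq_empty] at hemp
    apply h
    simp [fibDist, ← hS, hemp]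
  -- the set of naturals occurring in S
  set T : Set ℕ := {n : ℕ | (n : ℕ∞) ∈ S} with hT
  have hTne : T.Nonempty := by
    obtain ⟨n, hn⟩ := hne
    obtain ⟨k, hk, hw⟩ := hn
    exact ⟨k, show ((k : ℕ∞)) ∈ S from ⟨k, rfl, hw⟩⟩
  have hmem : ((sInf T : ℕ) : ℕ∞) ∈ S := Nat.sInf_mem hTne
  have heq : fibDist pX pY f = ((sInf T : ℕ) : ℕ∞) := by
    apply le_antisymm
    · exact sInf_le hmem
    · apply le_sInf
      intro b hb
      obtain ⟨k, hk, hw⟩ := hb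
      rw [← hk]
      exact_mod_cast Nat.sInf_le (show ((k : ℕ∞)) ∈ S from ⟨k, rfl, hw⟩)
  obtain ⟨k, hk, hrest⟩ := hmem
  exact ⟨k, by rw [heq, hk], hrest⟩

end Aux

/-- For fibrewise pointed maps, `D_B(f_1,…,f_r) ≤ ∏ (cat_B^*(f_i) + 1) - 1`, where
`cat_B^*(f_i) = D_B(f_i, s_Y ∘ p_X)`. -/
theorem stmt7 {B X Y : Type*} [TopologicalSpace B] [TopologicalSpace X] [TopologicalSpace Y]
    (pX : C(X, B)) (pY : C(Y, B)) (sX : C(B, X)) (sY : C(B, Y))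
    (hsX : ∀ b, pX (sX b) = b) (hsY : ∀ b, pY (sY b) = b)
    (r : ℕ) (f : Fin r → C(X, Y))
    (hf : ∀ i x, pY (f i x) = pX x) (hfp : ∀ i b, f i (sX b) = sY b) :
    fibDist (⇑pX) (⇑pY) f ≤
      (∏ i : Fin r,
        (fibDist (⇑pX) (⇑pY) (fun b : Fin 2 => if b.val = 0 then f i else sY.comp pX) + 1)) - 1 := by
  set cat : Fin r → ℕ∞ := fun i =>
    fibDist (⇑pX) (⇑pY) (fun b : Fin 2 => if b.val = 0 then f i else sY.comp pX) with hcat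
  by_cases htop : ∃ i, cat i = ⊤
  · -- the right-hand side is ⊤
    obtain ⟨i, hi⟩ := htop
    have hne0 : (∏ j ∈ Finset.univ.erase i, (cat j + 1)) ≠ 0 := by
      rw [Finset.prod_ne_zero_iff]
      intro j _
      simp
    have h1 : (∏ j : Fin r, (cat j + 1)) =
        (∏ j ∈ Finset.univ.erase i, (cat j + 1)) * (cat i + 1) :=
      (Finset.prod_erase_mul _ _ (Finset.mem_univ i)).symm
    have h2 : (∏ j : Fin r, (cat j + 1)) = ⊤ := by
      rw [h1, hi]
      rw [top_add, ENat.mul_top hne0]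
    have h3 : (∏ i : Fin r,
        ((fibDist (⇑pX) (⇑pY) (fun b : Fin 2 => if b.val = 0 then f i else sY.comp pX)) + 1))
        = ⊤ := by
      simpa only [hcat] using h2
    rw [h3]
    simp
  · push_neg at htop
    have hW : ∀ i : Fin r, ∃ k : ℕ, (k : ℕ∞) = cat i ∧ ∃ U : Fin (k + 1) → Set X,
        (∀ m, IsOpen (U m)) ∧ (⋃ m, U m) = Set.univ ∧
        ∀ m s t, FibHomotopic (fun x : U m => pX (x : X)) (⇑pY)
          (((fun b : Fin 2 => if b.val = 0 then f i else sY.comp pX) s).restrict (U m))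
          (((fun b : Fin 2 => if b.val = 0 then f i else sY.comp pX) t).restrict (U m)) :=
      fun i => fibDist_mem_of_ne_top _ _ _ (htop i)
    choose k hk U hUopen hUcov hUh using hW
    -- on each U i m, f i is fibrewise homotopic to sY ∘ pX
    have hnull : ∀ (i : Fin r) (m : Fin (k i + 1)),
        FibHomotopic (fun x : U i m => pX (x : X)) (⇑pY)
          ((f i).restrict (U i m)) ((sY.comp pX).restrict (U i m)) := by
      intro i m
      have := hUh i m 0 1
      simpa using this
    set N : ℕ := ∏ i : Fin r, (k i + 1) with hN
    have hNpos : 0 < N := Finset.prod_pos (fun i _ => Nat.succ_pos _)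
    set K : ℕ := N - 1 with hK
    have hKN : K + 1 = N := Nat.succ_pred_eq_of_pos hNpos
    have hcard : Fintype.card (∀ i : Fin r, Fin (k i + 1)) = K + 1 := by
      rw [Fintype.card_pi, hKN]
      simp [hN]
    set e : Fin (K + 1) ≃ (∀ i : Fin r, Fin (k i + 1)) :=
      (Fintype.equivFinOfCardEq hcard).symm with he
    set V : Fin (K + 1) → Set X := fun j => ⋂ i, U i (e j i) with hV
    have hsubV : ∀ (j : Fin (K + 1)) (i : Fin r), V j ⊆ U i (e j i) :=
      fun j i => Set.iInter_subset _ i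
    have hmain : fibDist (⇑pX) (⇑pY) f ≤ (K : ℕ∞) := by
      apply sInf_le
      refine ⟨K, rfl, V, fun j => isOpen_iInter_of_finite (fun i => hUopen i _), ?_, ?_⟩
      · ext x
        simp only [Set.mem_iUnion, Set.mem_univ, iff_true]
        have hx : ∀ i : Fin r, ∃ m : Fin (k i + 1), x ∈ U i m := by
          intro i
          have := hUcov i
          have hx' : x ∈ ⋃ m, U i m := by rw [this]; trivial
          exact Set.mem_iUnion.mp hx'
        choose c hc using hx
        refine ⟨e.symm c, ?_⟩
        rw [hV]
        apply Set.mem_iInter.mpr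
        intro i
        have : e (e.symm c) = c := e.apply_symm_apply c
        rw [this]
        exact hc i
      · intro j s t
        have hs : FibHomotopic (fun x : V j => pX (x : X)) (⇑pY)
            ((f s).restrict (V j)) ((sY.comp pX).restrict (V j)) :=
          FibHomotopic.mono (hsubV j s) _ _ (hnull s (e j s))
        have ht : FibHomotopic (fun x : V j => pX (x : X)) (⇑pY)
            ((f t).restrict (V j)) ((sY.comp pX).restrict (V j)) :=
          FibHomotopic.mono (hsubV j t) _ _ (hnull t (e j t))
        exact hs.trans' ht.symm'
    refine hmain.trans ?_
    have hprod : (∏ i : Fin r, (cat i + 1)) = (N : ℕ∞) := by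
      have hterm : ∀ i ∈ Finset.univ, cat i + 1 = ((k i + 1 : ℕ) : ℕ∞) := by
        intro i _
        rw [← hk i]
        push_cast
        ring
      rw [Finset.prod_congr rfl hterm, ← Nat.cast_prod, hN]
    have hprod' : (∏ i : Fin r,
        ((fibDist (⇑pX) (⇑pY) (fun b : Fin 2 => if b.val = 0 then f i else sY.comp pX)) + 1))
        = (N : ℕ∞) := by
      simpa only [hcat] using hprod
    rw [hprod']
    have hKcast : ((K : ℕ) : ℕ∞) = (N : ℕ∞) - 1 := by
      rw [hK]
      have : ((N - 1 : ℕ) : ℕ∞) = (N : ℕ∞) - ((1 : ℕ) : ℕ∞) := ENat.coe_sub _ _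
      simpa using this
    rw [hKcast]
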